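/- For every real t > 0, e^{1/t} - ψ'(t) = 1 + ∫_0^∞ [g(u) - u/(1 - e^{-u})] e^{-tu} du, where g(u) = ∑_{k=0}^∞ u^k/(k!(k+1)!). -/

import Mathlib

open MeasureTheory Set Real Filter

lemma key_int (k : ℕ) {c : ℝ} (hc : 0 < c) :
    ∫ u in Ioi (0:ℝ), u ^ k * Real.exp (-c * u) = k.factorial / c ^ (k + 1) := by
  have h := Real.integral_rpow_mul_exp_neg_mul_Ioi (a := (k : ℝ) + 1) (by positivity) hc
  rw [show ((k : ℝ) + 1 - 1) = (k : ℝ) by ring] at h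
  rw [Real.Gamma_nat_eq_factorial] at h
  rw [setIntegral_congr_fun measurableSet_Ioi
    (fun u (hu : u ∈ Ioi (0:ℝ)) => by
      show u ^ ((k:ℝ)) * Real.exp (-(c * u)) = u ^ k * Real.exp (-c * u)
      rw [Real.rpow_natCast, neg_mul] :
      EqOn (fun u : ℝ => u ^ ((k:ℝ)) * Real.exp (-(c * u)))
        (fun u : ℝ => u ^ k * Real.exp (-c * u)) (Ioi 0))] at h
  rw [h, show ((k : ℝ) + 1) = ((k + 1 : ℕ) : ℝ) by push_cast; ring, Real.rpow_natCast,
    div_pow, one_pow, div_mul_eq_mul_div, one_mul]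

lemma key_igr (k : ℕ) {c : ℝ} (hc : 0 < c) :
    IntegrableOn (fun u : ℝ => u ^ k * Real.exp (-c * u)) (Ioi 0) := by
  have h := integrableOn_rpow_mul_exp_neg_mul_rpow (s := (k : ℝ)) (p := 1)
    (neg_one_lt_zero.trans_le (Nat.cast_nonneg k)) one_pos hc
  refine h.congr_fun (fun u hu => ?_) measurableSet_Ioi
  simp only [Real.rpow_one, Real.rpow_natCast]

lemma exp_tsum (x : ℝ) : Real.exp x = 1 + ∑' k : ℕ, x ^ (k + 1) / ((k + 1).factorial : ℝ) := by
  have h : Real.exp x = ∑' n : ℕ, x ^ n / n.factorial := by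
    rw [Real.exp_eq_exp_ℝ, NormedSpace.exp_eq_tsum_div]
  rw [h, Summable.tsum_eq_zero_add (Real.summable_pow_div_factorial x)]
  simp

lemma sum_shift (x : ℝ) : Summable (fun k : ℕ => x ^ (k + 1) / ((k + 1).factorial : ℝ)) :=
  (Real.summable_pow_div_factorial x).comp_injective Nat.succ_injective

theorem stmt_10 : ∀ t : ℝ, 0 < t →
    Real.exp (1 / t) - (∑' n : ℕ, 1 / (t + n) ^ 2)
      = 1 + ∫ u in Set.Ioi (0 : ℝ),
          ((∑' k : ℕ, u ^ k / ((k.factorial : ℝ) * ((k + 1).factorial : ℝ)))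
            - u / (1 - Real.exp (-u))) * Real.exp (-t * u) := by
  intro t ht
  set F : ℕ → ℝ → ℝ :=
    fun k u => u ^ k / ((k.factorial : ℝ) * ((k + 1).factorial : ℝ)) * Real.exp (-t * u) with hFdef
  set H : ℕ → ℝ → ℝ := fun n u => u * Real.exp (-(t + n) * u) with hHdef
  have htn : ∀ n : ℕ, 0 < t + (n : ℝ) := fun n => by positivity
  have hFeq : ∀ k : ℕ, F k =
      fun u => ((k.factorial : ℝ) * ((k + 1).factorial : ℝ))⁻¹ * (u ^ k * Real.exp (-t * u)) := by
    intro k; funext u; simp only [hFdef]; ring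
  have hFint : ∀ k, IntegrableOn (F k) (Ioi 0) := by
    intro k; rw [hFeq k]; exact (key_igr k ht).const_mul _
  have hHeq : ∀ n : ℕ, H n = fun u : ℝ => u ^ 1 * Real.exp (-(t + n) * u) := by
    intro n; funext u; simp [hHdef]
  have hHint : ∀ n, IntegrableOn (H n) (Ioi 0) := by
    intro n; rw [hHeq n]; exact key_igr 1 (htn n)
  have hFval : ∀ k : ℕ, ∫ u in Ioi (0:ℝ), F k u = (1/t) ^ (k+1) / ((k+1).factorial : ℝ) := by
    intro k
    have h1 : (k.factorial : ℝ) ≠ 0 := by positivity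
    have h2 : ((k+1).factorial : ℝ) ≠ 0 := by positivity
    have h3 : (t : ℝ) ≠ 0 := ne_of_gt ht
    rw [hFeq k, integral_const_mul, key_int k ht, div_pow, one_pow]
    field_simp
  have hHval : ∀ n : ℕ, ∫ u in Ioi (0:ℝ), H n u = 1 / (t + n) ^ 2 := by
    intro n
    rw [hHeq n, key_int 1 (htn n)]
    norm_num
  have hsF : Summable (fun k : ℕ => (1/t) ^ (k+1) / ((k+1).factorial : ℝ)) := sum_shift (1/t)
  have hbase : Summable (fun n : ℕ => 1 / ((n:ℝ)+1) ^ 2) := by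
    have h := (summable_nat_add_iff 1).2 (summable_one_div_nat_pow.mpr (le_refl 2))
    refine h.congr fun n => ?_
    push_cast
    ring
  have hsH : Summable (fun n : ℕ => 1 / (t + (n:ℝ)) ^ 2) := by
    rw [← summable_nat_add_iff 1]
    refine Summable.of_nonneg_of_le (fun n => by positivity) (fun n => ?_) hbase
    rw [show ((n+1:ℕ):ℝ) = (n:ℝ)+1 by push_cast; ring]
    refine one_div_le_one_div_of_le (by positivity) ?_
    have hn : (n:ℝ) + 1 ≤ t + ((n:ℝ)+1) := by linarith
    exact pow_le_pow_left₀ (by positivity) hn 2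
  have hpt : EqOn
      (fun u : ℝ => ((∑' k : ℕ, u ^ k / ((k.factorial : ℝ) * ((k + 1).factorial : ℝ)))
          - u / (1 - Real.exp (-u))) * Real.exp (-t * u))
      (fun u : ℝ => ∑' k : ℕ, (F k u - H k u)) (Ioi 0) := by
    intro u hu
    have hu' : (0:ℝ) < u := hu
    have hlt : Real.exp (-u) < 1 := Real.exp_lt_one_iff.mpr (by linarith)
    have hpos : 0 < 1 - Real.exp (-u) := by linarith
    have hHform : ∀ n : ℕ, H n u = (u * Real.exp (-t*u)) * Real.exp (-u) ^ n := by
      intro n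
      simp only [hHdef]
      rw [show -(t + (n:ℝ)) * u = -t * u + (n:ℝ) * (-u) by ring, Real.exp_add, Real.exp_nat_mul]
      ring
    have hsum1 : Summable (fun k : ℕ => u ^ k / ((k.factorial : ℝ) * ((k+1).factorial : ℝ))) := by
      refine Summable.of_nonneg_of_le (fun k => by positivity) (fun k => ?_)
        (Real.summable_pow_div_factorial u)
      have h1 : (1:ℝ) ≤ ((k+1).factorial : ℝ) := by exact_mod_cast (k+1).factorial_pos
      calc u ^ k / ((k.factorial : ℝ) * ((k+1).factorial : ℝ))
          ≤ u ^ k / ((k.factorial : ℝ) * 1) := by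
            gcongr
            try exact h1
        _ = u ^ k / (k.factorial : ℝ) := by rw [mul_one]
    have hsum1' : Summable (fun k => F k u) := by
      simp only [hFdef]; exact hsum1.mul_right _
    have hsum2 : Summable (fun n : ℕ => H n u) := by
      refine Summable.congr
        (((summable_geometric_of_lt_one (Real.exp_nonneg _) hlt).mul_left
          (u * Real.exp (-t*u)))) fun n => (hHform n).symm
    show ((∑' k : ℕ, u ^ k / ((k.factorial : ℝ) * ((k + 1).factorial : ℝ)))
          - u / (1 - Real.exp (-u))) * Real.exp (-t * u) = ∑' k : ℕ, (F k u - H k u)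
    have hTS := Summable.tsum_sub hsum1' hsum2
    rw [hTS, sub_mul]
    congr 1
    · simp only [hFdef]
      exact tsum_mul_right.symm
    · rw [tsum_congr hHform, tsum_mul_left,
        tsum_geometric_of_lt_one (Real.exp_nonneg _) hlt]
      try field_simp
      try ring
  have hcontF : ∀ k : ℕ, Continuous (F k) := by
    intro k; simp only [hFdef]; fun_prop
  have hcontH : ∀ n : ℕ, Continuous (H n) := by
    intro n; simp only [hHdef]; fun_prop
  have hmeas : ∀ k : ℕ, AEStronglyMeasurable (fun u : ℝ => F k u - H k u)
      (volume.restrict (Ioi 0)) :=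
    fun k => ((hcontF k).sub (hcontH k)).aestronglyMeasurable
  have hFnorm : ∀ k, ∫⁻ u in Ioi (0:ℝ), ‖F k u‖₊
      = ENNReal.ofReal ((1/t) ^ (k+1) / ((k+1).factorial : ℝ)) := by
    intro k
    erw [← ofReal_integral_norm_eq_lintegral_enorm (hFint k)]
    congr 1
    rw [← hFval k]
    refine setIntegral_congr_fun measurableSet_Ioi (fun u hu => ?_)
    have hu' : (0:ℝ) < u := hu
    exact norm_of_nonneg (by simp only [hFdef]; positivity)
  have hHnorm : ∀ n, ∫⁻ u in Ioi (0:ℝ), ‖H n u‖₊ = ENNReal.ofReal (1 / (t + n) ^ 2) := by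
    intro n
    erw [← ofReal_integral_norm_eq_lintegral_enorm (hHint n)]
    congr 1
    rw [← hHval n]
    refine setIntegral_congr_fun measurableSet_Ioi (fun u hu => ?_)
    have hu' : (0:ℝ) < u := hu
    exact norm_of_nonneg (by simp only [hHdef]; positivity)
  have hne : (∑' k : ℕ, ∫⁻ u in Ioi (0:ℝ), ‖F k u - H k u‖₊) ≠ ⊤ := by
    have hb : ∀ k : ℕ, (∫⁻ u in Ioi (0:ℝ), ‖F k u - H k u‖₊)
        ≤ ENNReal.ofReal ((1/t) ^ (k+1) / ((k+1).factorial : ℝ))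
          + ENNReal.ofReal (1 / (t + k) ^ 2) := by
      intro k
      rw [← hFnorm k, ← hHnorm k,
        ← lintegral_add_left ((hcontF k).measurable.nnnorm.coe_nnreal_ennreal)]
      refine lintegral_mono fun u => ?_
      refine le_trans (ENNReal.coe_le_coe.mpr (nnnorm_sub_le (F k u) (H k u))) ?_
      rw [ENNReal.coe_add]
    refine ne_top_of_le_ne_top ?_ (ENNReal.tsum_le_tsum hb)
    rw [ENNReal.tsum_add,
      ← ENNReal.ofReal_tsum_of_nonneg (fun k => by positivity) hsF,
      ← ENNReal.ofReal_tsum_of_nonneg (fun n => by positivity) hsH]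
    exact ENNReal.add_ne_top.mpr ⟨ENNReal.ofReal_ne_top, ENNReal.ofReal_ne_top⟩
  have hint := integral_tsum hmeas hne
  rw [setIntegral_congr_fun measurableSet_Ioi hpt, hint]
  have hsplit : ∀ k : ℕ, ∫ u in Ioi (0:ℝ), (F k u - H k u)
      = (1/t) ^ (k+1) / ((k+1).factorial : ℝ) - 1 / (t + k) ^ 2 := by
    intro k
    rw [integral_sub (hFint k) (hHint k), hFval k, hHval k]
  rw [tsum_congr hsplit, Summable.tsum_sub hsF hsH]
  have hS : ∑' k : ℕ, (1/t) ^ (k+1) / ((k+1).factorial : ℝ) = Real.exp (1/t) - 1 := by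
    rw [exp_tsum (1/t)]; ring
  rw [hS]
  ring
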